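/- Let P = [0,1] \ ℚ and let X be the sublattice of C(P) given by X = C[0,1]|_P + span{ f_r : r ∈ [0,1] ∩ ℚ }, where f_r(t) = 1/|t − r|. Then X is a sublattice of C(P), i.e. closed under the lattice operations. -/

import Mathlib

open Filter Set

section Defs

variable (X : Type*) [Lattice X] [AddCommGroup X] [Module ℝ X]

/-- Archimedean property for a vector lattice. -/
def VLArchimedean : Prop := ∀ x y : X, (∀ n : ℕ, n • x ≤ y) → x ≤ 0

variable {X}

/-- `Y` is a sublattice: a linear subspace closed under `⊔`. -/
def IsVLSublattice (Y : Set X) : Prop :=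
  (0 : X) ∈ Y ∧ (∀ a ∈ Y, ∀ b ∈ Y, a + b ∈ Y) ∧
    (∀ (c : ℝ), ∀ a ∈ Y, c • a ∈ Y) ∧ (∀ a ∈ Y, ∀ b ∈ Y, a ⊔ b ∈ Y)

/-- `Y` is majorizing in `X`. -/
def Majorizing (Y : Set X) : Prop := ∀ x : X, 0 ≤ x → ∃ y ∈ Y, x ≤ y

/-- Relative uniform convergence of a sequence with regulator `e`. -/
def RUTendsto (x : ℕ → X) (l e : X) : Prop :=
  0 ≤ e ∧ ∀ ε : ℝ, 0 < ε → ∃ N, ∀ n ≥ N, |x n - l| ≤ ε • e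

/-- Relative uniform Cauchy sequence with regulator `e`. -/
def RUCauchy (x : ℕ → X) (e : X) : Prop :=
  0 ≤ e ∧ ∀ ε : ℝ, 0 < ε → ∃ N, ∀ n ≥ N, ∀ m ≥ N, |x n - x m| ≤ ε • e

/-- Relative uniform convergence of a net with regulator `e`. -/
def RUTendstoNet {ι : Type*} [Preorder ι] (x : ι → X) (l e : X) : Prop :=
  0 ≤ e ∧ ∀ ε : ℝ, 0 < ε → ∃ α₀, ∀ α ≥ α₀, |x α - l| ≤ ε • e

/-- Relative uniform Cauchy net with regulator `e`. -/
def RUCauchyNet {ι : Type*} [Preorder ι] (x : ι → X) (e : X) : Prop :=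
  0 ≤ e ∧ ∀ ε : ℝ, 0 < ε → ∃ α₀, ∀ α ≥ α₀, ∀ β ≥ α₀, |x α - x β| ≤ ε • e

/-- Uniform adherence of a set: all relative uniform limits of sequences from `A`. -/
def uAdh (A : Set X) : Set X :=
  {l | ∃ x : ℕ → X, (∀ n, x n ∈ A) ∧ ∃ e, RUTendsto x l e}

/-- `A` is uniformly closed. -/
def RUClosed (A : Set X) : Prop := uAdh A ⊆ A

/-- Uniform closure: the least uniformly closed superset of `A`. -/
def uClosure (A : Set X) : Set X := ⋂₀ {B : Set X | A ⊆ B ∧ RUClosed B}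

variable (X)

/-- Relative uniform completeness (for sequences). -/
def RUComplete : Prop :=
  ∀ x : ℕ → X, (∃ e, RUCauchy x e) → ∃ l e, RUTendsto x l e

variable {X}

/-- Relative uniform completeness of a sublattice `Y` (regulators taken in `Y`). -/
def RUCompleteIn (Y : Set X) : Prop :=
  ∀ x : ℕ → X, (∀ n, x n ∈ Y) → (∃ e ∈ Y, RUCauchy x e) →
    ∃ l ∈ Y, ∃ e ∈ Y, RUTendsto x l e

/-- An (order) ideal of a vector lattice: a solid linear subspace. -/
def IsVLIdeal (I : Set X) : Prop :=
  (0 : X) ∈ I ∧ (∀ a ∈ I, ∀ b ∈ I, a + b ∈ I) ∧ (∀ (c : ℝ), ∀ a ∈ I, c • a ∈ I) ∧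
    ∀ x : X, ∀ y ∈ I, |x| ≤ |y| → x ∈ I

/-- The ideal generated by a set. -/
def idealGen (Y : Set X) : Set X := ⋂₀ {I : Set X | Y ⊆ I ∧ IsVLIdeal I}

/-- `B` is a projection band: an ideal along which the space decomposes. -/
def IsProjectionBand (B : Set X) : Prop :=
  IsVLIdeal B ∧ ∀ x : X, ∃ b ∈ B, ∃ d : X, (∀ y ∈ B, |d| ⊓ |y| = 0) ∧ x = b + d

end Defs
noncomputable section BallHager

/-- The irrationals of `[0,1]`. -/
def Pset : Set ℝ := {t | t ∈ Set.Icc (0 : ℝ) 1 ∧ Irrational t}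

/-- For a rational `r`, the function `t ↦ 1/|t − r|`, continuous on `Pset`. -/
def fr (r : ℚ) : C(Pset, ℝ) :=
  ⟨fun t => 1 / |(t : ℝ) - (r : ℝ)|, by
    apply Continuous.div continuous_const
    · exact (continuous_subtype_val.sub continuous_const).abs
    · intro t
      simp only [ne_eq, abs_eq_zero, sub_eq_zero]
      exact fun h => t.2.2 ⟨r, h.symm⟩⟩

/-- Restriction of a continuous function on `[0,1]` to `Pset`. -/
def restrictP (v : C(Set.Icc (0 : ℝ) 1, ℝ)) : C(Pset, ℝ) :=
  v.comp ⟨fun t => ⟨(t : ℝ), t.2.1⟩, Continuous.subtype_mk continuous_subtype_val _⟩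

/-- The Ball–Hager sublattice `X = C[0,1]|_P + span{f_r : r ∈ [0,1] ∩ ℚ}`. -/
def XBH : Set C(Pset, ℝ) :=
  {g | ∃ v : C(Set.Icc (0 : ℝ) 1, ℝ), ∃ c : ℚ →₀ ℝ,
    (∀ r ∈ c.support, (r : ℝ) ∈ Set.Icc (0 : ℝ) 1) ∧
    g = restrictP v + c.sum fun r a => a • fr r}


open scoped Topology

/-- Sum of kernels with coefficients. -/
def Ksum (S : Finset ℚ) (d : ℚ → ℝ) (t : ℝ) : ℝ := ∑ s ∈ S, d s * (1 / |t - (s : ℝ)|)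

lemma ksum_contAt {S : Finset ℚ} {d : ℚ → ℝ} {t : ℝ}
    (h : ∀ s ∈ S, d s ≠ 0 → t ≠ (s : ℝ)) : ContinuousAt (Ksum S d) t := by
  apply tendsto_finset_sum
  intro s hs
  by_cases hd : d s = 0
  · simp only [hd, zero_mul]
    exact tendsto_const_nhds
  · have ht : t ≠ (s : ℝ) := h s hs hd
    exact (continuousAt_const.mul
      (continuousAt_const.div ((continuous_id.sub continuous_const).abs.continuousAt)
        (by simpa [abs_eq_zero, sub_eq_zero] using ht)))

lemma tendsto_one_div_abs_sub (s : ℚ) :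
    Tendsto (fun t : ℝ => 1 / |t - (s : ℝ)|) (𝓝[≠] (s : ℝ)) atTop := by
  have h1 : Tendsto (fun t : ℝ => |t - (s : ℝ)|) (𝓝[≠] (s : ℝ)) (𝓝[>] 0) := by
    rw [tendsto_nhdsWithin_iff]
    constructor
    · have : Continuous fun t : ℝ => |t - (s : ℝ)| :=
        (continuous_id.sub continuous_const).abs
      have h0 : Tendsto (fun t : ℝ => |t - (s : ℝ)|) (𝓝 (s : ℝ)) (𝓝 0) := by
        have := this.continuousAt (x := (s : ℝ))
        simpa [ContinuousAt] using this
      exact h0.mono_left nhdsWithin_le_nhds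
    · filter_upwards [self_mem_nhdsWithin] with x hx
      simpa [abs_pos, sub_eq_zero] using hx
  simpa [one_div, Pi.inv_def] using h1.inv_tendsto_nhdsGT_zero

lemma ksum_tendsto_atBot {S : Finset ℚ} {d : ℚ → ℝ} {s₀ : ℚ}
    (hs₀ : s₀ ∈ S) (hneg : d s₀ < 0) :
    Tendsto (Ksum S d) (𝓝[≠] (s₀ : ℝ)) atBot := by
  have hsplit : ∀ t : ℝ, Ksum S d t
      = d s₀ * (1 / |t - (s₀ : ℝ)|) + Ksum (S.erase s₀) d t := by
    intro t
    rw [Ksum, ← Finset.add_sum_erase _ _ hs₀]; rfl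
  have h1 : Tendsto (fun t : ℝ => d s₀ * (1 / |t - (s₀ : ℝ)|)) (𝓝[≠] (s₀ : ℝ)) atBot :=
    (tendsto_one_div_abs_sub s₀).const_mul_atTop_of_neg hneg
  have h2 : ContinuousAt (Ksum (S.erase s₀) d) (s₀ : ℝ) := by
    apply ksum_contAt
    intro s hs _
    have : s ≠ s₀ := Finset.ne_of_mem_erase hs
    exact fun hc => this (by exact_mod_cast hc.symm)
  have := h1.atBot_add (h2.mono_left nhdsWithin_le_nhds)
  exact this.congr fun t => (hsplit t).symm

lemma cm_sum_apply {ι : Type*} (s : Finset ι) (f : ι → C(Pset, ℝ)) (t : Pset) :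
    (∑ i ∈ s, f i) t = ∑ i ∈ s, f i t := by
  induction s using Finset.cons_induction with
  | empty => simp
  | cons i s hi ih => simp [Finset.sum_cons, ih]

lemma away_eventually {S : Finset ℚ} {t : ℝ} (ht : ∀ s ∈ S, t ≠ (s : ℝ)) :
    ∀ᶠ x in 𝓝 t, ∀ s ∈ S, x ≠ (s : ℝ) := by
  have hopen : IsOpen {x : ℝ | ∀ s ∈ S, x ≠ (s : ℝ)} := by
    have : {x : ℝ | ∀ s ∈ S, x ≠ (s : ℝ)} = ⋂ s ∈ S, {((s : ℝ))}ᶜ := by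
      ext x; simp
    rw [this]
    exact isOpen_biInter_finset fun s _ => isOpen_compl_singleton
  exact hopen.mem_nhds ht

/-- Key lemma: the positive part of an element of `XBH` (in canonical form) lies in `XBH`. -/
lemma posPart_mem_XBH (v : C(Set.Icc (0 : ℝ) 1, ℝ)) (a : ℚ →₀ ℝ)
    (ha : ∀ r ∈ a.support, (r : ℝ) ∈ Set.Icc (0 : ℝ) 1) :
    (restrictP v + a.sum fun r α => α • fr r) ⊔ 0 ∈ XBH := by
  classical
  set S : Finset ℚ := a.support with hS
  set c : ℚ → ℝ := fun s => max (a s) 0 with hc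
  set v' : ℝ → ℝ := Set.IccExtend zero_le_one ⇑v with hv'
  have hv'c : Continuous v' := v.continuous.Icc_extend'
  set A : ℝ → ℝ := fun t => v' t + Ksum S (fun s => a s - c s) t with hA
  set B : ℝ → ℝ := Ksum S (fun s => -(c s)) with hB
  set U : ℝ → ℝ := fun t =>
    if ∃ s ∈ S, t = (s : ℝ) ∧ 0 < a s then A t
    else if ∃ s ∈ S, t = (s : ℝ) ∧ a s < 0 then B t
    else max (A t) (B t) with hU
  -- continuity of U
  have hUcont : Continuous U := by
    rw [continuous_iff_continuousAt]
    intro t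
    by_cases htS : ∀ s ∈ S, t ≠ (s : ℝ)
    · have hAc : ContinuousAt A t :=
        hv'c.continuousAt.add (ksum_contAt fun s hs _ => htS s hs)
      have hBc : ContinuousAt B t := ksum_contAt fun s hs _ => htS s hs
      have hev : (fun x => max (A x) (B x)) =ᶠ[𝓝 t] U := by
        filter_upwards [away_eventually htS] with x hx
        have h1 : ¬ ∃ s ∈ S, x = (s : ℝ) ∧ 0 < a s := by
          rintro ⟨s, hs, heq, -⟩; exact hx s hs heq
        have h2 : ¬ ∃ s ∈ S, x = (s : ℝ) ∧ a s < 0 := by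
          rintro ⟨s, hs, heq, -⟩; exact hx s hs heq
        simp only [hU, h1, h2, if_false]
      exact (hAc.sup hBc).congr hev
    · push_neg at htS
      obtain ⟨s₀, hs₀, rfl⟩ := htS
      have ha0 : a s₀ ≠ 0 := Finsupp.mem_support_iff.mp hs₀
      have huniq : ∀ s : ℚ, ((s₀ : ℝ) = (s : ℝ)) → s = s₀ := by
        intro s h
        exact_mod_cast h.symm
      -- away from the other singularities, and off s₀ itself, U = max A B
      have hev : ∀ᶠ x in 𝓝[≠] ((s₀ : ℝ)), U x = max (A x) (B x) := by
        have herase : ∀ s ∈ S.erase s₀, ((s₀ : ℝ)) ≠ (s : ℝ) := by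
          intro s hs heq
          exact (Finset.ne_of_mem_erase hs) (huniq s heq)
        filter_upwards [(away_eventually herase).filter_mono nhdsWithin_le_nhds,
          self_mem_nhdsWithin] with x hx hx'
        have hxall : ∀ s ∈ S, x ≠ (s : ℝ) := by
          intro s hs
          by_cases h : s = s₀
          · subst h; exact hx'
          · exact hx s (Finset.mem_erase.mpr ⟨h, hs⟩)
        have h1 : ¬ ∃ s ∈ S, x = (s : ℝ) ∧ 0 < a s := by
          rintro ⟨s, hs, heq, -⟩; exact hxall s hs heq
        have h2 : ¬ ∃ s ∈ S, x = (s : ℝ) ∧ a s < 0 := by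
          rintro ⟨s, hs, heq, -⟩; exact hxall s hs heq
        simp only [hU, h1, h2, if_false]
      rcases lt_or_gt_of_ne ha0 with hneg | hpos
      · -- a s₀ < 0 : near s₀, A → -∞ and U → B s₀
        have hcS0 : c s₀ = 0 := max_eq_right hneg.le
        have hBc : ContinuousAt B ((s₀ : ℝ)) := by
          apply ksum_contAt
          intro s hs hd heq
          have hss : s = s₀ := huniq s heq
          rw [hss, hcS0] at hd
          simp at hd
        have hAbot : Tendsto A (𝓝[≠] ((s₀ : ℝ))) atBot := by
          have hk : Tendsto (Ksum S fun s => a s - c s) (𝓝[≠] ((s₀ : ℝ))) atBot :=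
            ksum_tendsto_atBot hs₀ (by rw [hcS0]; simpa using hneg)
          exact (hv'c.continuousAt.mono_left nhdsWithin_le_nhds).add_atBot hk
        have hBtd : Tendsto B (𝓝[≠] ((s₀ : ℝ))) (𝓝 (B ((s₀ : ℝ)))) :=
          hBc.mono_left nhdsWithin_le_nhds
        have hUval : U ((s₀ : ℝ)) = B ((s₀ : ℝ)) := by
          simp only [hU]
          rw [if_neg, if_pos]
          · exact ⟨s₀, hs₀, rfl, hneg⟩
          · rintro ⟨s, hs, heq, hp⟩
            rw [huniq s heq] at hp
            exact absurd hp (not_lt.mpr hneg.le)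
        have hevB : ∀ᶠ x in 𝓝[≠] ((s₀ : ℝ)), U x = B x := by
          filter_upwards [hev,
            hAbot.eventually (eventually_le_atBot (B ((s₀ : ℝ)) - 1)),
            hBtd.eventually (eventually_gt_nhds (by linarith : B ((s₀ : ℝ)) - 1 < B ((s₀ : ℝ))))]
            with x h1 h2 h3
          rw [h1, max_eq_right (by linarith)]
        have hpunct : Tendsto U (𝓝[≠] ((s₀ : ℝ))) (𝓝 (U ((s₀ : ℝ)))) := by
          rw [hUval]
          exact hBtd.congr' (by filter_upwards [hevB] with x hx using hx.symm)
        rw [ContinuousAt, ← nhdsNE_sup_pure ((s₀ : ℝ)), tendsto_sup]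
        exact ⟨hpunct, tendsto_pure_nhds U _⟩
      · -- 0 < a s₀ : near s₀, B → -∞ and U → A s₀
        have hcS0 : c s₀ = a s₀ := max_eq_left hpos.le
        have hAc : ContinuousAt A ((s₀ : ℝ)) := by
          apply hv'c.continuousAt.add
          apply ksum_contAt
          intro s hs hd heq
          have hss : s = s₀ := huniq s heq
          rw [hss, hcS0] at hd
          simp at hd
        have hBbot : Tendsto B (𝓝[≠] ((s₀ : ℝ))) atBot :=
          ksum_tendsto_atBot hs₀ (by rw [hcS0]; simpa using hpos)
        have hAtd : Tendsto A (𝓝[≠] ((s₀ : ℝ))) (𝓝 (A ((s₀ : ℝ)))) :=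
          hAc.mono_left nhdsWithin_le_nhds
        have hUval : U ((s₀ : ℝ)) = A ((s₀ : ℝ)) := by
          simp only [hU]
          rw [if_pos]
          exact ⟨s₀, hs₀, rfl, hpos⟩
        have hevA : ∀ᶠ x in 𝓝[≠] ((s₀ : ℝ)), U x = A x := by
          filter_upwards [hev,
            hBbot.eventually (eventually_le_atBot (A ((s₀ : ℝ)) - 1)),
            hAtd.eventually (eventually_gt_nhds (by linarith : A ((s₀ : ℝ)) - 1 < A ((s₀ : ℝ))))]
            with x h1 h2 h3
          rw [h1, max_eq_left (by linarith)]
        have hpunct : Tendsto U (𝓝[≠] ((s₀ : ℝ))) (𝓝 (U ((s₀ : ℝ)))) := by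
          rw [hUval]
          exact hAtd.congr' (by filter_upwards [hevA] with x hx using hx.symm)
        rw [ContinuousAt, ← nhdsNE_sup_pure ((s₀ : ℝ)), tendsto_sup]
        exact ⟨hpunct, tendsto_pure_nhds U _⟩
  -- assemble the witnesses
  set u : C(Set.Icc (0 : ℝ) 1, ℝ) := ⟨fun t => U (t : ℝ), hUcont.comp continuous_subtype_val⟩
  set c' : ℚ →₀ ℝ := a.mapRange (fun x => max x 0) (by simp) with hc'
  have hc'supp : c'.support ⊆ a.support := Finsupp.support_mapRange
  refine ⟨u, c', fun r hr => ha r (hc'supp hr), ?_⟩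
  ext t
  have htirr : Irrational (t : ℝ) := t.2.2
  have htne : ∀ s : ℚ, (t : ℝ) ≠ (s : ℝ) := fun s h => htirr ⟨s, h.symm⟩
  have hsum : ∀ b : ℚ →₀ ℝ, (b.sum fun r α => α • fr r) t
      = ∑ r ∈ b.support, b r * (1 / |(t : ℝ) - (r : ℝ)|) := by
    intro b
    rw [Finsupp.sum, cm_sum_apply]
    simp [fr]
  have hUt : U ((t : ℝ)) = max (A ((t : ℝ))) (B ((t : ℝ))) := by
    simp only [hU]
    rw [if_neg, if_neg]
    · rintro ⟨s, hs, heq, -⟩; exact htne s heq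
    · rintro ⟨s, hs, heq, -⟩; exact htne s heq
  have hv't : v' ((t : ℝ)) = v ⟨(t : ℝ), t.2.1⟩ := Set.IccExtend_of_mem zero_le_one (⇑v) t.2.1
  have hYsum : ∑ r ∈ c'.support, c' r * (1 / |(t : ℝ) - (r : ℝ)|)
      = ∑ s ∈ S, c s * (1 / |(t : ℝ) - (s : ℝ)|) := by
    rw [Finset.sum_subset hc'supp]
    · apply Finset.sum_congr rfl
      intro s _
      congr 1
    · intro x _ hx
      rw [Finsupp.notMem_support_iff.mp hx, zero_mul]
  -- evaluate both sides
  have hl : ((restrictP v + a.sum fun r α => α • fr r) ⊔ 0) t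
      = max (v ⟨(t : ℝ), t.2.1⟩ + ∑ s ∈ S, a s * (1 / |(t : ℝ) - (s : ℝ)|)) 0 := by
    rw [ContinuousMap.sup_apply, ContinuousMap.add_apply, hsum]
    rfl
  have hr : (restrictP u + c'.sum fun r α => α • fr r) t
      = U ((t : ℝ)) + ∑ r ∈ c'.support, c' r * (1 / |(t : ℝ) - (r : ℝ)|) := by
    rw [ContinuousMap.add_apply, hsum]
    rfl
  rw [hl, hr, hUt, hYsum]
  simp only [hA, hB, Ksum, hv't]
  have hsub : ∑ s ∈ S, (a s - c s) * (1 / |(t : ℝ) - (s : ℝ)|)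
      = (∑ s ∈ S, a s * (1 / |(t : ℝ) - (s : ℝ)|))
        - ∑ s ∈ S, c s * (1 / |(t : ℝ) - (s : ℝ)|) := by
    rw [← Finset.sum_sub_distrib]
    exact Finset.sum_congr rfl fun s _ => by ring
  have hneg' : ∑ s ∈ S, (-(c s)) * (1 / |(t : ℝ) - (s : ℝ)|)
      = - ∑ s ∈ S, c s * (1 / |(t : ℝ) - (s : ℝ)|) := by
    rw [← Finset.sum_neg_distrib]
    exact Finset.sum_congr rfl fun s _ => by ring
  have key : ∀ p y : ℝ, (p - y) ⊔ (-y) + y = p ⊔ 0 := by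
    intro p y
    rcases le_total p 0 with h | h
    · rw [max_eq_right (by linarith : p - y ≤ -y),
        max_eq_right h]
      ring
    · rw [max_eq_left (by linarith : -y ≤ p - y),
        max_eq_left h]
      ring
  rw [hsub, hneg', ← add_sub_assoc, key]

theorem XBH_is_sublattice : IsVLSublattice XBH := by
  classical
  have hzero : (0 : C(Pset, ℝ)) ∈ XBH := by
    refine ⟨0, 0, by simp, ?_⟩
    ext t
    simp [restrictP, Finsupp.sum_zero_index]
  have hadd : ∀ g ∈ XBH, ∀ h ∈ XBH, g + h ∈ XBH := by
    rintro g ⟨v, b, hb, rfl⟩ h ⟨w, d, hd, rfl⟩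
    refine ⟨v + w, b + d, ?_, ?_⟩
    · intro r hr
      rcases Finset.mem_union.mp (Finsupp.support_add hr) with h' | h'
      · exact hb r h'
      · exact hd r h'
    · rw [Finsupp.sum_add_index' (fun r => zero_smul ℝ (fr r))
        (fun r α β => add_smul α β (fr r))]
      ext t
      simp [restrictP]
      try ring
  have hsmul : ∀ (k : ℝ), ∀ g ∈ XBH, k • g ∈ XBH := by
    rintro k g ⟨v, b, hb, rfl⟩
    refine ⟨k • v, k • b, ?_, ?_⟩
    · intro r hr
      exact hb r (Finsupp.support_smul hr)
    · rw [Finsupp.sum_smul_index' (fun r => zero_smul ℝ (fr r))]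
      ext t
      simp [restrictP, Finsupp.sum, Finset.mul_sum, cm_sum_apply, mul_smul]
      try ring
  refine ⟨hzero, hadd, hsmul, ?_⟩
  rintro g hg h hh
  -- g ⊔ h = ((g - h) ⊔ 0) + h
  have hk : g ⊔ h = ((g + (-1 : ℝ) • h) ⊔ 0) + h := by
    ext t
    simp only [ContinuousMap.sup_apply, ContinuousMap.add_apply, ContinuousMap.smul_apply,
      ContinuousMap.zero_apply, smul_eq_mul, neg_one_mul]
    rcases le_total (g t) (h t) with h' | h'
    · rw [max_eq_right h', max_eq_right (by linarith)]
      ring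
    · rw [max_eq_left h', max_eq_left (by linarith)]
      ring
  rw [hk]
  apply hadd _ _ _ hh
  obtain ⟨v, b, hb, hrep⟩ := hadd g hg _ (hsmul (-1 : ℝ) h hh)
  rw [hrep]
  exact posPart_mem_XBH v b hb

end BallHager
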